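/- Let Γ be a finite graph such that the right-angled Coxeter group W_Γ has no finite direct factors (equivalently Γ is not a cone). Then the universal cover Y_Γ of the Davis complex has a hyperplane with extremal vertices if and only if there exist distinct vertices a, b of Γ with St(a) ⊆ St(b). -/

import Mathlib

open SimpleGraph

variable {V : Type*}

/-- A median graph: combinatorial model of (the 1-skeleton of) a CAT(0) cube complex. -/
def IsMedianGraph (G : SimpleGraph V) : Prop :=
  G.Connected ∧ ∀ x y z : V, ∃! m : V,
    G.dist x m + G.dist m y = G.dist x y ∧
    G.dist x m + G.dist m z = G.dist x z ∧
    G.dist y m + G.dist m z = G.dist y z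

/-- Djoković–Winkler relation on oriented edges of a median graph; hyperplanes are its classes. -/
def Theta (G : SimpleGraph V) (e f : V × V) : Prop :=
  G.dist e.1 f.1 + G.dist e.2 f.2 ≠ G.dist e.1 f.2 + G.dist e.2 f.1

/-- A hyperplane, identified with the set of (oriented) edges crossing it. -/
def IsHyperplane (G : SimpleGraph V) (h : Set (V × V)) : Prop :=
  ∃ e : V × V, G.Adj e.1 e.2 ∧ h = {f | G.Adj f.1 f.2 ∧ Theta G e f}

/-- The hyperplane `h` is adjacent to the vertex `v` (i.e. `v` lies in the carrier of `h`). -/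
def AdjTo (G : SimpleGraph V) (h : Set (V × V)) (v : V) : Prop :=
  ∃ e ∈ h, e.1 = v ∨ e.2 = v

/-- `Wv G v`: the set of hyperplanes adjacent to `v`. -/
def Wv (G : SimpleGraph V) (v : V) : Set (Set (V × V)) :=
  {h | IsHyperplane G h ∧ AdjTo G h v}

/-- Two hyperplanes are in contact if their carriers share a vertex. -/
def Contact (G : SimpleGraph V) (h h' : Set (V × V)) : Prop :=
  ∃ v : V, AdjTo G h v ∧ AdjTo G h' v

/-- Two hyperplanes are transverse if they cross a common square. -/
def Transverse (G : SimpleGraph V) (h h' : Set (V × V)) : Prop :=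
  ∃ a b c d : V, (a, b) ∈ h ∧ (c, d) ∈ h ∧ (a, c) ∈ h' ∧ (b, d) ∈ h' ∧
    G.Adj a b ∧ G.Adj c d ∧ G.Adj a c ∧ G.Adj b d

/-- A clique in the contact graph: a set of hyperplanes whose carriers pairwise intersect. -/
def IsContactClique (G : SimpleGraph V) (C : Set (Set (V × V))) : Prop :=
  (∀ h ∈ C, IsHyperplane G h) ∧ ∀ h ∈ C, ∀ h' ∈ C, h ≠ h' → Contact G h h'

/-- A maximal clique in the contact graph. -/
def IsMaxContactClique (G : SimpleGraph V) (C : Set (Set (V × V))) : Prop :=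
  IsContactClique G C ∧ ∀ C', IsContactClique G C' → C ⊆ C' → C' = C

/-- The link of `v` is a cone, i.e. `v` is an extremal vertex. -/
def LinkIsCone (G : SimpleGraph V) (v : V) : Prop :=
  ∃ h ∈ Wv G v, ∀ h' ∈ Wv G v, h' ≠ h → Transverse G h h'

/-- Uniform local finiteness. -/
def UnifLocFinite (G : SimpleGraph V) : Prop :=
  ∃ N : ℕ, ∀ v : V, (G.neighborSet v).Finite ∧ (G.neighborSet v).ncard ≤ N

abbrev Hyp (G : SimpleGraph V) := {h : Set (V × V) // IsHyperplane G h}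

/-- The contact graph `𝒞(X)`. -/
def contactGraph (G : SimpleGraph V) : SimpleGraph (Hyp G) where
  Adj h h' := h ≠ h' ∧ Contact G h.1 h'.1
  symm := ⟨by
    rintro h h' ⟨hne, v, hv, hv'⟩
    exact ⟨hne.symm, v, hv', hv⟩⟩
  loopless := ⟨by rintro h ⟨hne, -⟩; exact hne rfl⟩

/-- `Ical G w` = I(w): the hyperplanes whose carrier contains the carrier of `w`,
i.e. the intersection of the sets `Wv G v` over all vertices `v` adjacent to `w`. -/
def Ical (G : SimpleGraph V) (w : Set (V × V)) : Set (Set (V × V)) :=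
  {u | IsHyperplane G u ∧ ∀ v : V, AdjTo G w v → AdjTo G u v}

/-- `Ical0 G w` = I⁰(w): the hyperplanes with the same carrier as `w`. -/
def Ical0 (G : SimpleGraph V) (w : Set (V × V)) : Set (Set (V × V)) :=
  {u | u ∈ Ical G w ∧ w ∈ Ical G u}

/-- The action of a cubical automorphism on sets of edges (e.g. hyperplanes). -/
def hmap (G : SimpleGraph V) (φ : G ≃g G) (h : Set (V × V)) : Set (V × V) :=
  (fun e : V × V => (φ e.1, φ e.2)) '' h

/-- `π` is the vertex permutation induced by the contact-graph automorphism `ψ` via the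
correspondence between vertices and maximal cliques (`ρ(ψ) = π`). -/
def InducesPerm (G : SimpleGraph V) (ψ : contactGraph G ≃g contactGraph G)
    (π : Equiv.Perm V) : Prop :=
  ∀ (v : V) (h : Hyp G), h.1 ∈ Wv G v ↔ (ψ h).1 ∈ Wv G (π v)

/-- The hyperplane `u` is adjacent, inside the cube complex structure of a hyperplane `w`,
to the vertex of `w` given by the edge `e ∈ w`: `u` crosses a square containing `e`. -/
def HypAdjEdge (G : SimpleGraph V) (u : Set (V × V)) (e : V × V) : Prop :=
  ∃ c d : V, (e.1, c) ∈ u ∧ (e.2, d) ∈ u ∧ G.Adj c d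

/-- The link, in the cube complex structure of hyperplane `w`, of the vertex given by
`e ∈ w` is a cone (i.e. this vertex of `w` is extremal). -/
def HypLinkCone (G : SimpleGraph V) (w : Set (V × V)) (e : V × V) : Prop :=
  ∃ u, IsHyperplane G u ∧ u ≠ w ∧ HypAdjEdge G u e ∧
    ∀ u', IsHyperplane G u' → u' ≠ w → HypAdjEdge G u' e → u' ≠ u → Transverse G u u'

/-- No hyperplane of `X` has an extremal vertex. -/
def NoHypExtremalVertex (G : SimpleGraph V) : Prop :=
  ∀ w, IsHyperplane G w → ∀ e ∈ w, ¬ HypLinkCone G w e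

section Davis

/-- Relations of the right-angled Coxeter group `W_Γ`. -/
def racgRels (A : Type*) (Γ : SimpleGraph A) : Set (FreeGroup A) :=
  {x | ∃ a : A, x = FreeGroup.of a ^ 2} ∪
  {x | ∃ a b : A, Γ.Adj a b ∧ x = (FreeGroup.of a * FreeGroup.of b) ^ 2}

/-- The right-angled Coxeter group `W_Γ`. -/
abbrev RACG (A : Type*) (Γ : SimpleGraph A) := PresentedGroup (racgRels A Γ)

/-- The standard generator of `W_Γ` corresponding to the vertex `a` of `Γ`. -/
def racgGen {A : Type*} (Γ : SimpleGraph A) (a : A) : RACG A Γ :=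
  PresentedGroup.of a

/-- The 1-skeleton of the universal cover `Y_Γ` of the Davis complex: the Cayley graph of
`W_Γ` with respect to the standard generators. -/
def davisGraph (A : Type*) (Γ : SimpleGraph A) : SimpleGraph (RACG A Γ) :=
  SimpleGraph.fromRel (fun g h => ∃ a : A, h = g * racgGen Γ a)

/-- The hyperplane `h` of `Y_Γ` is labelled by the vertex `a` of `Γ`. -/
def HypLabel {A : Type*} (Γ : SimpleGraph A) (h : Set (RACG A Γ × RACG A Γ)) (a : A) :
    Prop :=
  ∃ e ∈ h, e.2 = e.1 * racgGen Γ a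

/-- The star of a vertex of `Γ`. -/
def starSet {A : Type*} (Γ : SimpleGraph A) (a : A) : Set A := {x | x = a ∨ Γ.Adj a x}

/-- `Γ` is a cone (equivalently, `W_Γ` has a finite direct factor). -/
def GraphIsCone {A : Type*} (Γ : SimpleGraph A) : Prop :=
  ∃ a : A, ∀ b : A, b ≠ a → Γ.Adj a b

end Davis

namespace RacgAux

variable {A : Type*} (Γ : SimpleGraph A)

theorem mk_rel_one {α : Type*} {rels : Set (FreeGroup α)} {r : FreeGroup α} (hr : r ∈ rels) :
    PresentedGroup.mk rels r = 1 :=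
  (QuotientGroup.eq_one_iff r).2 (Subgroup.subset_normalClosure hr)

theorem racgGen_sq (a : A) : racgGen Γ a ^ 2 = 1 := by
  have : racgGen Γ a ^ 2 = PresentedGroup.mk (racgRels A Γ) (FreeGroup.of a ^ 2) := by
    simp [racgGen, PresentedGroup.of]
  rw [this, mk_rel_one (Or.inl ⟨a, rfl⟩)]

theorem racgGen_mul_self (a : A) : racgGen Γ a * racgGen Γ a = 1 := by
  have := racgGen_sq Γ a; rwa [sq] at this

theorem racgGen_inv (a : A) : (racgGen Γ a)⁻¹ = racgGen Γ a := by
  rw [inv_eq_iff_mul_eq_one, racgGen_mul_self]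

theorem racg_pair_sq {a b : A} (h : Γ.Adj a b) : (racgGen Γ a * racgGen Γ b) ^ 2 = 1 := by
  have : (racgGen Γ a * racgGen Γ b) ^ 2
      = PresentedGroup.mk (racgRels A Γ) ((FreeGroup.of a * FreeGroup.of b) ^ 2) := by
    simp [racgGen, PresentedGroup.of]
  rw [this, mk_rel_one (Or.inr ⟨a, b, h, rfl⟩)]

theorem comm_of_adj {a b : A} (h : Γ.Adj a b) :
    racgGen Γ a * racgGen Γ b = racgGen Γ b * racgGen Γ a := by
  have h2 := racg_pair_sq Γ h
  rw [sq] at h2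
  have : racgGen Γ a * racgGen Γ b = (racgGen Γ a * racgGen Γ b)⁻¹ :=
    eq_inv_of_mul_eq_one_left h2
  rw [this, mul_inv_rev, racgGen_inv, racgGen_inv]

open Classical in
/-- The Coxeter matrix of the RACG. -/
noncomputable def racgMatrix : CoxeterMatrix A where
  M := Matrix.of fun a b => if a = b then 1 else if Γ.Adj a b then 2 else 0
  isSymm := by
    unfold Matrix.IsSymm
    ext a b
    simp only [Matrix.transpose_apply, Matrix.of_apply]
    by_cases h : a = b
    · subst h; simp
    · rw [if_neg h, if_neg (Ne.symm h), Γ.adj_comm]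
  diagonal := fun i => by simp
  off_diagonal := fun i i' h => by
    show (if i = i' then 1 else if Γ.Adj i i' then 2 else 0) ≠ 1
    rw [if_neg h]
    split <;> omega

theorem racgMatrix_adj {a b : A} (h : Γ.Adj a b) : racgMatrix Γ a b = 2 := by
  simp only [racgMatrix, Matrix.of_apply]
  rw [if_neg h.ne, if_pos h]

theorem racgMatrix_eq {a : A} : racgMatrix Γ a a = 1 := by
  simp [racgMatrix]

theorem racgMatrix_nadj {a b : A} (hne : a ≠ b) (h : ¬ Γ.Adj a b) : racgMatrix Γ a b = 0 := by
  simp only [racgMatrix, Matrix.of_apply]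
  rw [if_neg hne, if_neg h]

/-- The homomorphism from the RACG to the Coxeter-presented group. -/
noncomputable def racgToCox : RACG A Γ →* (racgMatrix Γ).Group := by
  refine PresentedGroup.toGroup (f := fun a => (racgMatrix Γ).simple a) ?_
  rintro r (⟨a, rfl⟩ | ⟨a, b, hab, rfl⟩) <;>
    simp only [map_pow, map_mul, FreeGroup.lift_apply_of]
  · have h := (racgMatrix Γ).toCoxeterSystem.simple_sq a
    rw [CoxeterMatrix.toCoxeterSystem_simple] at h
    simpa using h
  · have h := (racgMatrix Γ).toCoxeterSystem.simple_mul_simple_pow a b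
    rw [CoxeterMatrix.toCoxeterSystem_simple, racgMatrix_adj Γ hab] at h
    simpa using h

/-- The homomorphism from the Coxeter-presented group to the RACG. -/
noncomputable def coxToRacg : (racgMatrix Γ).Group →* RACG A Γ := by
  refine PresentedGroup.toGroup (f := racgGen Γ) ?_
  rintro r ⟨⟨a, b⟩, rfl⟩
  simp only [Function.uncurry, CoxeterMatrix.relation, map_pow, map_mul, FreeGroup.lift_apply_of]
  by_cases hab : a = b
  · subst hab; rw [racgMatrix_eq, pow_one, ← sq, racgGen_sq]
  · by_cases hadj : Γ.Adj a b
    · rw [racgMatrix_adj Γ hadj, racg_pair_sq Γ hadj]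
    · rw [racgMatrix_nadj Γ hab hadj, pow_zero]

theorem racgToCox_gen (a : A) : racgToCox Γ (racgGen Γ a) = (racgMatrix Γ).simple a :=
  PresentedGroup.toGroup.of _

theorem coxToRacg_gen (a : A) : coxToRacg Γ ((racgMatrix Γ).simple a) = racgGen Γ a :=
  PresentedGroup.toGroup.of _

/-- The isomorphism. -/
noncomputable def racgEquiv : (racgMatrix Γ).Group ≃* RACG A Γ := by
  refine MonoidHom.toMulEquiv (coxToRacg Γ) (racgToCox Γ) ?_ ?_
  · apply CoxeterSystem.ext_simple (racgMatrix Γ).toCoxeterSystem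
    intro x
    rw [CoxeterMatrix.toCoxeterSystem_simple]
    simp only [MonoidHom.comp_apply, MonoidHom.id_apply]
    rw [coxToRacg_gen, racgToCox_gen]
  · apply PresentedGroup.ext
    intro x
    simp only [MonoidHom.comp_apply, MonoidHom.id_apply]
    show coxToRacg Γ (racgToCox Γ (racgGen Γ x)) = racgGen Γ x
    rw [racgToCox_gen, coxToRacg_gen]

/-- The Coxeter system on the RACG. -/
noncomputable def racgCS : CoxeterSystem (racgMatrix Γ) (RACG A Γ) :=
  (racgMatrix Γ).toCoxeterSystem.map (racgEquiv Γ)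

theorem racgCS_simple (a : A) : (racgCS Γ).simple a = racgGen Γ a := by
  rw [racgCS, CoxeterSystem.map_simple, CoxeterMatrix.toCoxeterSystem_simple]
  exact coxToRacg_gen Γ a

end RacgAux
namespace RacgAux

variable {A : Type*} (Γ : SimpleGraph A)

/-! ### Character to detect generators -/

/-- Character homomorphism recording exponent sums mod 2. -/
noncomputable def chiHom : RACG A Γ →* (A → Multiplicative (ZMod 2)) := by
  classical
  refine PresentedGroup.toGroup
    (f := fun b => fun a' => Multiplicative.ofAdd (if b = a' then 1 else 0)) ?_
  have key : ∀ z : ZMod 2, Multiplicative.ofAdd z ^ 2 = 1 := by decide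
  rintro r (⟨a, rfl⟩ | ⟨a, b, hab, rfl⟩) <;>
    simp only [map_pow, map_mul, FreeGroup.lift_apply_of]
  · funext a'
    simp only [Pi.pow_apply, Pi.one_apply]
    exact key _
  · funext a'
    simp only [Pi.pow_apply, Pi.mul_apply, Pi.one_apply, ← ofAdd_add]
    exact key _

open Classical in
theorem chiHom_gen (a a' : A) :
    chiHom Γ (racgGen Γ a) a' = Multiplicative.ofAdd (if a = a' then (1 : ZMod 2) else 0) := by
  classical
  have h : chiHom Γ (racgGen Γ a)
      = fun a' => Multiplicative.ofAdd (if a = a' then (1 : ZMod 2) else 0) :=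
    PresentedGroup.toGroup.of _
  rw [h]

theorem chiHom_conj_gen (g : RACG A Γ) (a a' : A) :
    chiHom Γ (g * racgGen Γ a * g⁻¹) a' = chiHom Γ (racgGen Γ a) a' := by
  rw [map_mul, map_mul, map_inv]
  simp only [Pi.mul_apply, Pi.inv_apply]
  rw [mul_comm (chiHom Γ g a'), mul_assoc, mul_inv_cancel, mul_one]

theorem wall_label_eq {g h : RACG A Γ} {a b : A}
    (hw : g * racgGen Γ a * g⁻¹ = h * racgGen Γ b * h⁻¹) : a = b := by
  classical
  have h1 := congrArg (fun x => chiHom Γ x a) hw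
  rw [chiHom_conj_gen, chiHom_conj_gen, chiHom_gen, chiHom_gen] at h1
  by_contra hne
  rw [if_pos rfl, if_neg (fun hh => hne hh.symm)] at h1
  exact absurd (Multiplicative.ofAdd.injective h1) (by decide)

theorem racgGen_injective : Function.Injective (racgGen Γ) := by
  intro a b h
  have : (1 : RACG A Γ) * racgGen Γ a * 1⁻¹ = 1 * racgGen Γ b * 1⁻¹ := by
    simp only [one_mul, inv_one, mul_one, h]
  exact wall_label_eq Γ this

theorem racgGen_ne_one (a : A) : racgGen Γ a ≠ 1 := by
  classical
  intro h
  have h1 := congrArg (fun x => chiHom Γ x a) h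
  simp only [map_one, Pi.one_apply, chiHom_gen, if_pos rfl] at h1
  exact absurd (Multiplicative.ofAdd.injective (h1.trans rfl)) (by decide)

open Classical in
theorem adj_of_comm {a b : A} (hne : a ≠ b)
    (hc : racgGen Γ a * racgGen Γ b = racgGen Γ b * racgGen Γ a) : Γ.Adj a b := by
  by_contra hadj
  set F : A → Equiv.Perm (Fin 3) := fun c => if c = a then Equiv.swap (0 : Fin 3) 1
    else if c = b then Equiv.swap (1 : Fin 3) 2 else 1 with hF
  have fsq : ∀ c : A, F c ^ 2 = 1 := by
    intro c
    simp only [hF]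
    split
    · rw [sq, Equiv.swap_mul_self]
    split
    · rw [sq, Equiv.swap_mul_self]
    · rw [one_pow]
  have key : ∀ u v : Equiv.Perm (Fin 3), u ^ 2 = 1 → v ^ 2 = 1 →
      (u = 1 ∨ v = 1 ∨ u = v) → (u * v) ^ 2 = 1 := by
    rintro u v hu hv (rfl | rfl | rfl)
    · rw [one_mul]; exact hv
    · rw [mul_one]; exact hu
    · rw [← sq, ← pow_mul, mul_comm 2 2, pow_mul, hu, one_pow]
  have hrels : ∀ r ∈ racgRels A Γ, FreeGroup.lift F r = 1 := by
    rintro r (⟨c, rfl⟩ | ⟨c, d, hcd, rfl⟩) <;>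
      simp only [map_pow, map_mul, FreeGroup.lift_apply_of]
    · exact fsq c
    · refine key _ _ (fsq c) (fsq d) ?_
      by_cases hca : c = a
      · by_cases hdb : d = b
        · subst hca; subst hdb; exact absurd hcd hadj
        · by_cases hda : d = a
          · right; right; subst hca; subst hda; rfl
          · right; left; simp only [hF]; simp only [if_neg hda, if_neg hdb]
      · by_cases hcb : c = b
        · by_cases hda : d = a
          · subst hcb; subst hda; exact absurd hcd.symm hadj
          · by_cases hdb : d = b
            · right; right; subst hcb; subst hdb; rfl
            · right; left; simp only [hF]; simp only [if_neg hda, if_neg hdb]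
        · left; simp only [hF]; simp only [if_neg hca, if_neg hcb]
  set ψ := PresentedGroup.toGroup hrels with hψ
  have h1 := congrArg ψ hc
  have hgen : ∀ c : A, ψ (racgGen Γ c) = F c := fun c => PresentedGroup.toGroup.of hrels
  have hFa : F a = Equiv.swap 0 1 := by
    rw [show F a = if a = a then Equiv.swap (0 : Fin 3) 1
      else if a = b then Equiv.swap (1 : Fin 3) 2 else 1 from rfl, if_pos rfl]
  have hFb : F b = Equiv.swap 1 2 := by
    rw [show F b = if b = a then Equiv.swap (0 : Fin 3) 1
      else if b = b then Equiv.swap (1 : Fin 3) 2 else 1 from rfl, if_neg hne.symm, if_pos rfl]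
  rw [map_mul, map_mul, hgen a, hgen b, hFa, hFb] at h1
  exact absurd h1 (by decide)

/-! ### The permutation representation (Tits) -/

theorem gen_conj_conj (a : A) (x : RACG A Γ) :
    racgGen Γ a * (racgGen Γ a * x * racgGen Γ a) * racgGen Γ a = x := by
  have h := racgGen_mul_self Γ a
  calc racgGen Γ a * (racgGen Γ a * x * racgGen Γ a) * racgGen Γ a
      = (racgGen Γ a * racgGen Γ a) * x * (racgGen Γ a * racgGen Γ a) := by group
    _ = x := by rw [h, one_mul, mul_one]

theorem gen_conj_eq_iff (a : A) (x y : RACG A Γ) :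
    racgGen Γ a * x * racgGen Γ a = y ↔ x = racgGen Γ a * y * racgGen Γ a := by
  constructor
  · rintro rfl; rw [gen_conj_conj]
  · rintro rfl; rw [gen_conj_conj]

/-- The permutation associated to a generator. -/
noncomputable def genPerm (a : A) : Equiv.Perm (RACG A Γ × ZMod 2) := by
  classical
  refine Function.Involutive.toPerm
    (fun p => (racgGen Γ a * p.1 * racgGen Γ a,
      p.2 + if p.1 = racgGen Γ a then 1 else 0)) ?_
  intro p
  refine Prod.ext (gen_conj_conj Γ a p.1) ?_
  show p.2 + _ + _ = p.2
  have hiff : (racgGen Γ a * p.1 * racgGen Γ a = racgGen Γ a) ↔ p.1 = racgGen Γ a := by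
    rw [gen_conj_eq_iff, racgGen_mul_self, one_mul]
  by_cases hp : p.1 = racgGen Γ a
  · rw [if_pos hp, if_pos (hiff.mpr hp)]
    have h11 : (1 : ZMod 2) + 1 = 0 := by decide
    rw [add_assoc, h11, add_zero]
  · rw [if_neg hp, if_neg (fun hh => hp (hiff.mp hh))]
    rw [add_zero, add_zero]

open Classical in
theorem genPerm_apply (a : A) (p : RACG A Γ × ZMod 2) :
    genPerm Γ a p = (racgGen Γ a * p.1 * racgGen Γ a,
      p.2 + if p.1 = racgGen Γ a then 1 else 0) := by
  classical
  rfl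

end RacgAux
namespace RacgAux

variable {A : Type*} (Γ : SimpleGraph A)

theorem genPerm_genPerm (a : A) (p : RACG A Γ × ZMod 2) :
    genPerm Γ a (genPerm Γ a p) = p := by
  classical
  rw [genPerm_apply, genPerm_apply]
  refine Prod.ext (gen_conj_conj Γ a p.1) ?_
  show p.2 + _ + _ = p.2
  have hiff : (racgGen Γ a * p.1 * racgGen Γ a = racgGen Γ a) ↔ p.1 = racgGen Γ a := by
    rw [gen_conj_eq_iff, racgGen_mul_self, one_mul]
  by_cases hp : p.1 = racgGen Γ a
  · rw [if_pos hp, if_pos (hiff.mpr hp)]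
    have h11 : (1 : ZMod 2) + 1 = 0 := by decide
    rw [add_assoc, h11, add_zero]
  · rw [if_neg hp, if_neg (fun hh => hp (hiff.mp hh))]
    rw [add_zero, add_zero]

/-- The Tits permutation representation. -/
noncomputable def racgPerm : RACG A Γ →* Equiv.Perm (RACG A Γ × ZMod 2) := by
  classical
  refine PresentedGroup.toGroup (f := genPerm Γ) ?_
  rintro r (⟨a, rfl⟩ | ⟨a, b, hab, rfl⟩) <;>
    simp only [map_pow, map_mul, FreeGroup.lift_apply_of]
  · rw [sq]
    apply Equiv.ext
    intro p
    rw [Equiv.Perm.mul_apply, genPerm_genPerm, Equiv.Perm.one_apply]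
  · apply Equiv.ext
    intro p
    rw [sq, Equiv.Perm.mul_apply, Equiv.Perm.mul_apply, Equiv.Perm.mul_apply,
      Equiv.Perm.one_apply]
    rw [genPerm_apply, genPerm_apply, genPerm_apply, genPerm_apply]
    have hc := comm_of_adj Γ hab
    have h1 : racgGen Γ b * racgGen Γ a * racgGen Γ b = racgGen Γ a := by
      rw [← hc, mul_assoc, racgGen_mul_self, mul_one]
    have h2 : racgGen Γ a * racgGen Γ b * racgGen Γ a = racgGen Γ b := by
      rw [hc, mul_assoc, racgGen_mul_self, mul_one]
    have h3 : racgGen Γ b * racgGen Γ b * racgGen Γ b = racgGen Γ b := by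
      rw [racgGen_mul_self, one_mul]
    have h4 : racgGen Γ a * racgGen Γ a * racgGen Γ a = racgGen Γ a := by
      rw [racgGen_mul_self, one_mul]
    have hsq1 : racgGen Γ a * racgGen Γ b * (racgGen Γ a * racgGen Γ b) = 1 := by
      have := racg_pair_sq Γ hab; rwa [sq] at this
    have hsq2 : racgGen Γ b * racgGen Γ a * (racgGen Γ b * racgGen Γ a) = 1 := by
      have := racg_pair_sq Γ hab.symm; rwa [sq] at this
    have e2 : (racgGen Γ b * p.1 * racgGen Γ b = racgGen Γ a) ↔ p.1 = racgGen Γ a := by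
      rw [gen_conj_eq_iff, h1]
    have e3 : (racgGen Γ a * (racgGen Γ b * p.1 * racgGen Γ b) * racgGen Γ a = racgGen Γ b)
        ↔ p.1 = racgGen Γ b := by
      rw [gen_conj_eq_iff, h2, gen_conj_eq_iff, h3]
    have e4 : (racgGen Γ b * (racgGen Γ a * (racgGen Γ b * p.1 * racgGen Γ b) * racgGen Γ a)
        * racgGen Γ b = racgGen Γ a) ↔ p.1 = racgGen Γ a := by
      rw [gen_conj_eq_iff, h1, gen_conj_eq_iff, h4, e2]
    refine Prod.ext ?_ ?_
    · show racgGen Γ a * (racgGen Γ b * (racgGen Γ a * (racgGen Γ b * p.1 * racgGen Γ b)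
        * racgGen Γ a) * racgGen Γ b) * racgGen Γ a = p.1
      calc racgGen Γ a * (racgGen Γ b * (racgGen Γ a * (racgGen Γ b * p.1 * racgGen Γ b)
            * racgGen Γ a) * racgGen Γ b) * racgGen Γ a
          = (racgGen Γ a * racgGen Γ b * (racgGen Γ a * racgGen Γ b)) * p.1 *
            (racgGen Γ b * racgGen Γ a * (racgGen Γ b * racgGen Γ a)) := by group
        _ = p.1 := by rw [hsq1, hsq2, one_mul, mul_one]
    · show p.2 + _ + _ + _ + _ = p.2
      by_cases hpa : p.1 = racgGen Γ a <;> by_cases hpb : p.1 = racgGen Γ b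
      · exact absurd (racgGen_injective Γ (hpa.symm.trans hpb)) hab.ne
      · rw [if_neg hpb, if_pos (e2.mpr hpa), if_neg (fun hh => hpb (e3.mp hh)),
          if_pos (e4.mpr hpa)]
        have : ∀ z : ZMod 2, z + 0 + 1 + 0 + 1 = z := by decide
        exact this p.2
      · rw [if_pos hpb, if_neg (fun hh => hpa (e2.mp hh)), if_pos (e3.mpr hpb),
          if_neg (fun hh => hpa (e4.mp hh))]
        have : ∀ z : ZMod 2, z + 1 + 0 + 1 + 0 = z := by decide
        exact this p.2
      · rw [if_neg hpb, if_neg (fun hh => hpa (e2.mp hh)), if_neg (fun hh => hpb (e3.mp hh)),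
          if_neg (fun hh => hpa (e4.mp hh))]
        rw [add_zero, add_zero, add_zero, add_zero]

theorem racgPerm_gen (a : A) : racgPerm Γ (racgGen Γ a) = genPerm Γ a :=
  PresentedGroup.toGroup.of _

theorem racgPerm_spec (g : RACG A Γ) : ∀ p : RACG A Γ × ZMod 2,
    (racgPerm Γ g p).1 = g * p.1 * g⁻¹ ∧
    (racgPerm Γ g p).2 = p.2 + (racgPerm Γ g (p.1, 0)).2 := by
  classical
  refine (racgCS Γ).simple_induction
    (p := fun g => ∀ p : RACG A Γ × ZMod 2,
      (racgPerm Γ g p).1 = g * p.1 * g⁻¹ ∧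
      (racgPerm Γ g p).2 = p.2 + (racgPerm Γ g (p.1, 0)).2) g ?_ ?_ ?_
  · intro i p
    rw [racgCS_simple, racgPerm_gen, genPerm_apply, genPerm_apply]
    constructor
    · show racgGen Γ i * p.1 * racgGen Γ i = _
      rw [racgGen_inv]
    · show p.2 + _ = p.2 + (0 + _)
      rw [zero_add]
  · intro p
    rw [map_one, Equiv.Perm.one_apply, Equiv.Perm.one_apply]
    constructor
    · simp
    · simp
  · intro w w' hw hw' p
    rw [map_mul, Equiv.Perm.mul_apply]
    constructor
    · rw [(hw _).1, (hw' _).1, mul_inv_rev]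
      group
    · rw [(hw _).2, (hw' p).2, (hw' (p.1, 0)).2]
      have hfst : (racgPerm Γ w' p).1 = w' * p.1 * w'⁻¹ := (hw' p).1
      have hfst0 : (racgPerm Γ w' (p.1, 0)).1 = w' * p.1 * w'⁻¹ := by
        rw [(hw' (p.1, 0)).1]
      have hr := (hw ((racgPerm Γ w') (p.1, 0))).2
      rw [Equiv.Perm.mul_apply, hr, hfst0, hfst]
      simp [add_assoc]

/-- The crossing number mod 2 of the "wall" of `t` on a path from the identity to `w`. -/
noncomputable def eta (w t : RACG A Γ) : ZMod 2 := (racgPerm Γ w⁻¹ (t, 0)).2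

theorem eta_one (t : RACG A Γ) : eta Γ 1 t = 0 := by
  rw [eta, inv_one, map_one, Equiv.Perm.one_apply]

theorem eta_mul (u v t : RACG A Γ) :
    eta Γ (u * v) t = eta Γ u t + eta Γ v (u⁻¹ * t * u) := by
  rw [eta, mul_inv_rev, map_mul, Equiv.Perm.mul_apply]
  have h1 := (racgPerm_spec Γ v⁻¹ ((racgPerm Γ u⁻¹) (t, 0))).2
  have h2 := (racgPerm_spec Γ u⁻¹ (t, 0)).1
  rw [h1, h2, inv_inv]
  rfl

open Classical in
theorem eta_gen (a : A) (v : RACG A Γ) :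
    eta Γ (racgGen Γ a) v = if v = racgGen Γ a then 1 else 0 := by
  rw [eta, racgGen_inv, racgPerm_gen, genPerm_apply, zero_add]

end RacgAux
namespace RacgAux

section CSGeneral

variable {B : Type*} {W : Type*} [Group W] {M : CoxeterMatrix B} (cs : CoxeterSystem M W)

/-- Conjugation as a plain function. -/
def conjFn (g : W) : W → W := fun t => g * t * g⁻¹

theorem conjFn_injective (g : W) : Function.Injective (conjFn g) := by
  intro x y h
  simpa [conjFn] using mul_left_cancel (mul_right_cancel h)

theorem conjFn_comp (g h : W) : conjFn g ∘ conjFn h = conjFn (g * h) := by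
  funext t
  simp only [conjFn, Function.comp_apply, mul_inv_rev]
  group

theorem coe_mulAut_conj (g : W) : ⇑(MulAut.conj g) = conjFn g := by
  funext t
  simp [conjFn, MulAut.conj_apply]

theorem lis_cons (i : B) (ω : List B) :
    cs.leftInvSeq (i :: ω) = cs.simple i ::
      (cs.leftInvSeq ω).map (conjFn (cs.simple i)) := by
  rw [← coe_mulAut_conj]
  rfl

theorem lis_append (ω₁ ω₂ : List B) :
    cs.leftInvSeq (ω₁ ++ ω₂) = cs.leftInvSeq ω₁ ++
      (cs.leftInvSeq ω₂).map (conjFn (cs.wordProd ω₁)) := by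
  induction ω₁ with
  | nil =>
      rw [show conjFn (cs.wordProd []) = id from funext fun t => by
        simp [conjFn]]
      simp
  | cons j ω ih =>
      rw [List.cons_append, lis_cons, ih, lis_cons, List.map_append, List.map_map,
        conjFn_comp, CoxeterSystem.wordProd_cons, List.cons_append]

open Classical in
theorem count_lis_ris (α : List B) (i : B) :
    (cs.leftInvSeq α).count (cs.wordProd α * cs.simple i * (cs.wordProd α)⁻¹)
      = (cs.rightInvSeq α).count (cs.simple i) := by
  classical
  induction α generalizing i with
  | nil => simp
  | cons j β ih =>
      have hris : cs.rightInvSeq (j :: β)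
          = (cs.wordProd β)⁻¹ * cs.simple j * cs.wordProd β :: cs.rightInvSeq β := rfl
      rw [lis_cons, hris, List.count_cons, List.count_cons]
      have hX : cs.wordProd (j :: β) * cs.simple i * (cs.wordProd (j :: β))⁻¹
          = conjFn (cs.simple j)
            (cs.wordProd β * cs.simple i * (cs.wordProd β)⁻¹) := by
        rw [CoxeterSystem.wordProd_cons, conjFn]
        simp only [mul_inv_rev]
        group
      rw [hX, List.count_map_of_injective _ _ (conjFn_injective _), ih]
      congr 1
      have hiff : (cs.simple j
            = conjFn (cs.simple j) (cs.wordProd β * cs.simple i * (cs.wordProd β)⁻¹))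
          ↔ ((cs.wordProd β)⁻¹ * cs.simple j * cs.wordProd β = cs.simple i) := by
        unfold conjFn
        constructor
        · intro h
          have h2 : cs.wordProd β * cs.simple i * (cs.wordProd β)⁻¹ = cs.simple j := by
            have := congrArg (fun x => (cs.simple j)⁻¹ * x * cs.simple j) h
            calc cs.wordProd β * cs.simple i * (cs.wordProd β)⁻¹
                = (cs.simple j)⁻¹ * (cs.simple j *
                    (cs.wordProd β * cs.simple i * (cs.wordProd β)⁻¹) *
                    (cs.simple j)⁻¹) * cs.simple j := by group
              _ = (cs.simple j)⁻¹ * cs.simple j * cs.simple j := by rw [← h]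
              _ = cs.simple j := by group
          rw [← h2]; group
        · intro h
          have h2 : cs.wordProd β * cs.simple i * (cs.wordProd β)⁻¹ = cs.simple j := by
            rw [← h]; group
          rw [h2]
          group
      simp only [beq_iff_eq]
      exact if_congr hiff rfl rfl

end CSGeneral

variable {A : Type*} (Γ : SimpleGraph A)

open Classical in
theorem eta_wordProd (ω : List A) (t : RACG A Γ) :
    eta Γ ((racgCS Γ).wordProd ω) t = (((racgCS Γ).leftInvSeq ω).count t : ZMod 2) := by
  classical
  induction ω generalizing t with
  | nil => simp [eta_one]
  | cons i ω ih =>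
      rw [CoxeterSystem.wordProd_cons, eta_mul]
      have hg : eta Γ ((racgCS Γ).simple i) t = if t = (racgCS Γ).simple i then 1 else 0 := by
        rw [racgCS_simple, eta_gen]
      have harg : ((racgCS Γ).simple i)⁻¹ * t * (racgCS Γ).simple i
          = (racgCS Γ).simple i * t * (racgCS Γ).simple i := by
        rw [racgCS_simple, racgGen_inv]
      have hmap := List.count_map_of_injective ((racgCS Γ).leftInvSeq ω)
        (conjFn ((racgCS Γ).simple i)) (conjFn_injective _)
        ((racgCS Γ).simple i * t * (racgCS Γ).simple i)
      have harg2 : conjFn ((racgCS Γ).simple i)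
          ((racgCS Γ).simple i * t * (racgCS Γ).simple i) = t := by
        unfold conjFn
        rw [racgCS_simple, racgGen_inv, gen_conj_conj]
      rw [harg2] at hmap
      rw [hg, harg, ih, lis_cons, List.count_cons, hmap]
      by_cases ht : t = (racgCS Γ).simple i
      · rw [if_pos ht, if_pos (beq_iff_eq.mpr ht.symm), Nat.cast_add, Nat.cast_one, add_comm]
      · rw [if_neg ht, if_neg (fun hc => ht (beq_iff_eq.mp hc).symm), add_zero, zero_add]

open Classical in
theorem eta_reflection_self {t : RACG A Γ} (ht : (racgCS Γ).IsReflection t) :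
    eta Γ t t = 1 := by
  classical
  obtain ⟨u, i, rfl⟩ := ht
  obtain ⟨α, rfl⟩ := (racgCS Γ).wordProd_surjective u
  set cs := racgCS Γ
  have hπ : cs.wordProd (α ++ i :: α.reverse)
      = cs.wordProd α * cs.simple i * (cs.wordProd α)⁻¹ := by
    rw [CoxeterSystem.wordProd_append, CoxeterSystem.wordProd_cons,
      CoxeterSystem.wordProd_reverse, ← mul_assoc]
  rw [← hπ, eta_wordProd, hπ]
  rw [lis_append, lis_cons, CoxeterSystem.leftInvSeq_reverse, List.count_append,
    List.map_cons, List.count_cons, List.map_map, conjFn_comp]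
  have h1 : (cs.leftInvSeq α).count (cs.wordProd α * cs.simple i * (cs.wordProd α)⁻¹)
      = (cs.rightInvSeq α).count (cs.simple i) := count_lis_ris cs α i
  have h2 := List.count_map_of_injective ((cs.rightInvSeq α).reverse)
    (conjFn (cs.wordProd α * cs.simple i)) (conjFn_injective _) (cs.simple i)
  have harg : conjFn (cs.wordProd α * cs.simple i) (cs.simple i)
      = cs.wordProd α * cs.simple i * (cs.wordProd α)⁻¹ := by
    unfold conjFn
    group
  rw [harg, List.count_reverse] at h2
  have h3 : conjFn (cs.wordProd α) (cs.simple i)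
      = cs.wordProd α * cs.simple i * (cs.wordProd α)⁻¹ := rfl
  rw [h1, h2, h3, if_pos (beq_iff_eq.mpr rfl)]
  push_cast
  have hz : ∀ z : ZMod 2, z + (z + 1) = 1 := by decide
  exact hz _

theorem length_lt_of_eta_one {t : RACG A Γ} (ht : (racgCS Γ).IsReflection t)
    (w : RACG A Γ) (hη : eta Γ w t = 1) :
    (racgCS Γ).length (t * w) < (racgCS Γ).length w := by
  classical
  obtain ⟨ω, hred, rfl⟩ := (racgCS Γ).exists_reduced_word' w
  rw [eta_wordProd] at hη
  have hmem : t ∈ (racgCS Γ).leftInvSeq ω := by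
    by_contra hmem
    rw [List.count_eq_zero.mpr hmem] at hη
    simp at hη
  exact ((racgCS Γ).isLeftInversion_of_mem_leftInvSeq hred hmem).2

theorem eta_one_iff {t : RACG A Γ} (ht : (racgCS Γ).IsReflection t) (w : RACG A Γ) :
    eta Γ w t = 1 ↔ (racgCS Γ).length (t * w) < (racgCS Γ).length w := by
  constructor
  · exact length_lt_of_eta_one Γ ht w
  · intro hlt
    by_contra hne
    have h0 : eta Γ w t = 0 := by
      have : ∀ x : ZMod 2, x = 0 ∨ x = 1 := by decide
      rcases this (eta Γ w t) with h | h
      · exact h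
      · exact absurd h hne
    have hw : w = t * (t * w) := by rw [← mul_assoc, ht.mul_self, one_mul]
    have hsplit : eta Γ w t = eta Γ t t + eta Γ (t * w) (t⁻¹ * t * t) := by
      conv_lhs => rw [hw]
      rw [eta_mul]
    rw [ht.inv, ht.mul_self, one_mul, eta_reflection_self Γ ht, h0] at hsplit
    have h1 : eta Γ (t * w) t = 1 := by
      have : ∀ x : ZMod 2, 0 = 1 + x → x = 1 := by decide
      exact this _ hsplit
    have := length_lt_of_eta_one Γ ht (t * w) h1
    rw [← hw] at this
    omega

end RacgAux
namespace RacgAux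

variable {A : Type*} (Γ : SimpleGraph A)

/-! ### Separation sets -/

/-- The set of "walls" separating `x` from `y`. -/
def sepSet (x y : RACG A Γ) : Set (RACG A Γ) :=
  {t | (racgCS Γ).IsReflection t ∧ eta Γ (x⁻¹ * y) (x⁻¹ * t * x) = 1}

theorem refl_conj {t : RACG A Γ} (ht : (racgCS Γ).IsReflection t) (x : RACG A Γ) :
    (racgCS Γ).IsReflection (x⁻¹ * t * x) := by
  have := ht.conj x⁻¹
  rwa [inv_inv] at this

theorem mem_sepSet_iff {x y t : RACG A Γ} :
    t ∈ sepSet Γ x y ↔ (racgCS Γ).IsReflection t ∧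
      (racgCS Γ).length (x⁻¹ * t * y) < (racgCS Γ).length (x⁻¹ * y) := by
  unfold sepSet
  rw [Set.mem_setOf_eq]
  refine and_congr_right fun ht => ?_
  rw [eta_one_iff Γ (refl_conj Γ ht x)]
  have harg : x⁻¹ * t * x * (x⁻¹ * y) = x⁻¹ * t * y := by group
  rw [harg]

theorem sepSet_symm (x y : RACG A Γ) : sepSet Γ x y = sepSet Γ y x := by
  ext t
  rw [mem_sepSet_iff, mem_sepSet_iff]
  refine and_congr_right fun ht => ?_
  have e1 : (racgCS Γ).length (y⁻¹ * t * x) = (racgCS Γ).length (x⁻¹ * t * y) := by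
    rw [← CoxeterSystem.length_inv]
    congr 1
    rw [mul_inv_rev, mul_inv_rev, inv_inv, ht.inv, ← mul_assoc]
  have e2 : (racgCS Γ).length (y⁻¹ * x) = (racgCS Γ).length (x⁻¹ * y) := by
    rw [← CoxeterSystem.length_inv, mul_inv_rev, inv_inv]
  rw [e1, e2]

open Classical in
theorem sepSet_finset (x y : RACG A Γ) :
    ∃ F : Finset (RACG A Γ), ↑F = sepSet Γ x y ∧
      F.card = (racgCS Γ).length (x⁻¹ * y) := by
  classical
  obtain ⟨ω, hred, hw⟩ := (racgCS Γ).exists_reduced_word' (x⁻¹ * y)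
  set L : List (RACG A Γ) := ((racgCS Γ).leftInvSeq ω).map (conjFn x) with hL
  have hLnodup : L.Nodup := (hred.nodup_leftInvSeq).map (conjFn_injective x)
  refine ⟨L.toFinset, ?_, ?_⟩
  · ext t
    rw [List.coe_toFinset, Set.mem_setOf_eq, hL, List.mem_map]
    unfold sepSet
    rw [Set.mem_setOf_eq]
    constructor
    · rintro ⟨t₀, hmem, rfl⟩
      have ht₀ := (racgCS Γ).isReflection_of_mem_leftInvSeq ω hmem
      constructor
      · exact ht₀.conj x
      · have harg : x⁻¹ * conjFn x t₀ * x = t₀ := by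
          unfold conjFn; group
        rw [harg, hw, eta_wordProd, List.count_eq_one_of_mem hred.nodup_leftInvSeq hmem]
        norm_num
    · rintro ⟨ht, hη⟩
      refine ⟨x⁻¹ * t * x, ?_, ?_⟩
      · rw [hw, eta_wordProd] at hη
        by_contra hmem
        rw [List.count_eq_zero.mpr hmem] at hη
        simp at hη
      · unfold conjFn; group
  · rw [List.toFinset_card_of_nodup hLnodup, hL, List.length_map,
      CoxeterSystem.length_leftInvSeq, hw]
    exact hred.symm

theorem sepSet_finite (x y : RACG A Γ) : (sepSet Γ x y).Finite := by
  obtain ⟨F, hF, -⟩ := sepSet_finset Γ x y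
  rw [← hF]
  exact F.finite_toSet

theorem sepSet_ncard (x y : RACG A Γ) :
    (sepSet Γ x y).ncard = (racgCS Γ).length (x⁻¹ * y) := by
  obtain ⟨F, hF, hcard⟩ := sepSet_finset Γ x y
  rw [← hF, Set.ncard_coe_finset, hcard]

theorem sepSet_toggle (x y : RACG A Γ) (a : A) :
    sepSet Γ x (y * racgGen Γ a)
      = symmDiff (sepSet Γ x y) {y * racgGen Γ a * y⁻¹} := by
  classical
  ext t
  set r := y * racgGen Γ a * y⁻¹ with hr
  have hrrefl : (racgCS Γ).IsReflection r := ⟨y, a, by rw [racgCS_simple]⟩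
  have hco : x⁻¹ * (y * racgGen Γ a) = x⁻¹ * y * racgGen Γ a := by group
  have hinner : (x⁻¹ * y)⁻¹ * (x⁻¹ * t * x) * (x⁻¹ * y) = y⁻¹ * t * y := by group
  have hcond : (y⁻¹ * t * y = racgGen Γ a) ↔ t = r := by
    constructor
    · intro h
      have ht' : t = y * (y⁻¹ * t * y) * y⁻¹ := by group
      rw [ht', h, hr]
    · intro h
      rw [h, hr]
      group
  have hmemE : t ∈ sepSet Γ x y ↔ ((racgCS Γ).IsReflection t ∧
      eta Γ (x⁻¹ * y) (x⁻¹ * t * x) = 1) := Iff.rfl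
  have hmemL : t ∈ sepSet Γ x (y * racgGen Γ a) ↔ ((racgCS Γ).IsReflection t ∧
      eta Γ (x⁻¹ * y) (x⁻¹ * t * x) + (if t = r then 1 else 0) = 1) := by
    unfold sepSet
    rw [Set.mem_setOf_eq, hco, eta_mul, hinner, eta_gen]
    rw [if_congr hcond rfl rfl]
  rw [hmemL, Set.mem_symmDiff, Set.mem_singleton_iff]
  have hz : ∀ z : ZMod 2, z + 1 = 1 ↔ z = 0 := by decide
  have hzc : ∀ z : ZMod 2, z = 0 ∨ z = 1 := by decide
  by_cases htr : t = r
  · rw [if_pos htr, htr]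
    constructor
    · rintro ⟨-, hη⟩
      have hη0 := (hz _).mp hη
      exact Or.inr ⟨rfl, fun hmem => by rw [hmem.2] at hη0; exact one_ne_zero hη0⟩
    · rintro (⟨-, hne⟩ | ⟨-, hnmem⟩)
      · exact absurd rfl hne
      · refine ⟨hrrefl, (hz _).mpr ?_⟩
        rcases hzc (eta Γ (x⁻¹ * y) (x⁻¹ * r * x)) with h0 | h1
        · exact h0
        · exact absurd ⟨hrrefl, h1⟩ hnmem
  · rw [if_neg htr, add_zero]
    exact ⟨fun hh => Or.inl ⟨hh, htr⟩,
      fun hh => hh.elim (fun z => z.1) (fun z => absurd z.1 htr)⟩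

/-! ### The Davis graph: adjacency and distance -/

theorem davis_adj_iff (g h : RACG A Γ) :
    (davisGraph A Γ).Adj g h ↔ g ≠ h ∧ ∃ a, h = g * racgGen Γ a := by
  rw [davisGraph, SimpleGraph.fromRel_adj]
  refine and_congr_right fun hne => ?_
  constructor
  · rintro (⟨a, rfl⟩ | ⟨a, rfl⟩)
    · exact ⟨a, rfl⟩
    · refine ⟨a, ?_⟩
      rw [mul_assoc, racgGen_mul_self, mul_one]
  · rintro ⟨a, rfl⟩
    exact Or.inl ⟨a, rfl⟩

theorem davis_adj_gen (g : RACG A Γ) (a : A) :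
    (davisGraph A Γ).Adj g (g * racgGen Γ a) := by
  rw [davis_adj_iff]
  refine ⟨fun hh => ?_, a, rfl⟩
  have h1 : g * 1 = g * racgGen Γ a := by rw [mul_one]; exact hh
  exact racgGen_ne_one Γ a (mul_left_cancel h1).symm

theorem davis_walk (g : RACG A Γ) (ω : List A) :
    ∃ p : (davisGraph A Γ).Walk g (g * (racgCS Γ).wordProd ω), p.length = ω.length := by
  induction ω generalizing g with
  | nil =>
      refine ⟨SimpleGraph.Walk.nil.copy rfl ?_, by simp⟩
      rw [CoxeterSystem.wordProd_nil, mul_one]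
  | cons i ω ih =>
      obtain ⟨p, hp⟩ := ih (g * racgGen Γ i)
      have hend : g * (racgCS Γ).wordProd (i :: ω)
          = g * racgGen Γ i * (racgCS Γ).wordProd ω := by
        rw [CoxeterSystem.wordProd_cons, racgCS_simple, ← mul_assoc]
      refine ⟨(SimpleGraph.Walk.cons (davis_adj_gen Γ g i) p).copy rfl hend.symm, ?_⟩
      rw [SimpleGraph.Walk.length_copy, SimpleGraph.Walk.length_cons, hp, List.length_cons]

theorem davis_reachable (g h : RACG A Γ) : (davisGraph A Γ).Reachable g h := by
  obtain ⟨ω, hred, hw⟩ := (racgCS Γ).exists_reduced_word' (g⁻¹ * h)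
  obtain ⟨p, -⟩ := davis_walk Γ g ω
  exact ⟨p.copy rfl (show g * (racgCS Γ).wordProd ω = h by rw [← hw]; group)⟩

theorem length_le_walk {g h : RACG A Γ} (p : (davisGraph A Γ).Walk g h) :
    (racgCS Γ).length (g⁻¹ * h) ≤ p.length := by
  induction p with
  | nil => simp
  | @cons u x v hadj p ih =>
      obtain ⟨-, a, rfl⟩ := (davis_adj_iff Γ _ _).mp hadj
      have hsplit : u⁻¹ * v = racgGen Γ a * ((u * racgGen Γ a)⁻¹ * v) := by group
      have hlen := (racgCS Γ).length_mul_le (racgGen Γ a) ((u * racgGen Γ a)⁻¹ * v)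
      have hgen : (racgCS Γ).length (racgGen Γ a) = 1 := by
        rw [← racgCS_simple, CoxeterSystem.length_simple]
      rw [SimpleGraph.Walk.length_cons]
      rw [hsplit]
      omega

theorem davis_dist (g h : RACG A Γ) :
    (davisGraph A Γ).dist g h = (racgCS Γ).length (g⁻¹ * h) := by
  refine le_antisymm ?_ ?_
  · obtain ⟨ω, hred, hw⟩ := (racgCS Γ).exists_reduced_word' (g⁻¹ * h)
    obtain ⟨p, hp⟩ := davis_walk Γ g ω
    have := SimpleGraph.dist_le (p.copy rfl
      (show g * (racgCS Γ).wordProd ω = h by rw [← hw]; group))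
    rw [SimpleGraph.Walk.length_copy, hp] at this
    rw [hw]
    exact le_trans this (le_of_eq hred.symm)
  · obtain ⟨p, hp⟩ := (davis_reachable Γ g h).exists_walk_length_eq_dist
    rw [← hp]
    exact length_le_walk Γ p

theorem davis_dist_sep (g h : RACG A Γ) :
    (davisGraph A Γ).dist g h = (sepSet Γ g h).ncard := by
  rw [davis_dist, sepSet_ncard]

/-! ### Cardinality of symmetric differences -/

theorem finite_symmDiff {α : Type*} {E : Set α} (hE : E.Finite) (r : α) :
    (symmDiff E {r}).Finite := by
  refine (hE.union (Set.finite_singleton r)).subset ?_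
  intro x hx
  rw [Set.mem_symmDiff] at hx
  rcases hx with ⟨h, -⟩ | ⟨h, -⟩
  · exact Or.inl h
  · exact Or.inr h

theorem ncard_symmDiff_mem {α : Type*} {E : Set α} {r : α} (hE : E.Finite) (hr : r ∈ E) :
    (symmDiff E {r}).ncard + 1 = E.ncard := by
  have hh : symmDiff E {r} = E \ {r} := by
    ext x
    rw [Set.mem_symmDiff]
    simp only [Set.mem_diff, Set.mem_singleton_iff]
    constructor
    · rintro (⟨h1, h2⟩ | ⟨h1, h2⟩)
      · exact ⟨h1, h2⟩
      · exact absurd (h1 ▸ hr) h2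
    · rintro ⟨h1, h2⟩
      exact Or.inl ⟨h1, h2⟩
  rw [hh]
  exact Set.ncard_diff_singleton_add_one hr hE

theorem ncard_symmDiff_not_mem {α : Type*} {E : Set α} {r : α} (hE : E.Finite) (hr : r ∉ E) :
    (symmDiff E {r}).ncard = E.ncard + 1 := by
  have hh : symmDiff E {r} = insert r E := by
    ext x
    rw [Set.mem_symmDiff]
    simp only [Set.mem_insert_iff, Set.mem_singleton_iff]
    constructor
    · rintro (⟨h1, h2⟩ | ⟨h1, h2⟩)
      · exact Or.inr h1
      · exact Or.inl h1
    · rintro (rfl | h1)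
      · exact Or.inr ⟨rfl, hr⟩
      · exact Or.inl ⟨h1, fun hh => hr (hh ▸ h1)⟩
  rw [hh]
  exact Set.ncard_insert_of_notMem hr hE

theorem mem_symmDiff_singleton_of_ne {α : Type*} {E : Set α} {r r' : α} (hne : r' ≠ r) :
    r' ∈ symmDiff E {r} ↔ r' ∈ E := by
  rw [Set.mem_symmDiff, Set.mem_singleton_iff]
  constructor
  · rintro (⟨h, -⟩ | ⟨h, -⟩)
    · exact h
    · exact absurd h hne
  · intro h
    exact Or.inl ⟨h, hne⟩

/-! ### The Djoković–Winkler relation via walls -/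

theorem theta_iff (g h : RACG A Γ) (a b : A) :
    Theta (davisGraph A Γ) (g, g * racgGen Γ a) (h, h * racgGen Γ b) ↔
      g * racgGen Γ a * g⁻¹ = h * racgGen Γ b * h⁻¹ := by
  set r := g * racgGen Γ a * g⁻¹ with hr
  set r' := h * racgGen Γ b * h⁻¹ with hr'
  set E := sepSet Γ g h with hE
  have hEfin : E.Finite := sepSet_finite Γ g h
  have e2 : sepSet Γ g (h * racgGen Γ b) = symmDiff E {r'} := sepSet_toggle Γ g h b
  have e4 : sepSet Γ (g * racgGen Γ a) h = symmDiff E {r} := by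
    rw [sepSet_symm Γ (g * racgGen Γ a) h, sepSet_toggle Γ h g a, sepSet_symm Γ h g]
  have e3 : sepSet Γ (g * racgGen Γ a) (h * racgGen Γ b)
      = symmDiff (symmDiff E {r}) {r'} := by
    rw [sepSet_toggle Γ (g * racgGen Γ a) h b, e4]
  have hth : Theta (davisGraph A Γ) (g, g * racgGen Γ a) (h, h * racgGen Γ b) ↔
      (E.ncard + (symmDiff (symmDiff E {r}) {r'}).ncard ≠
        (symmDiff E {r'}).ncard + (symmDiff E {r}).ncard) := by
    unfold Theta
    rw [davis_dist_sep, davis_dist_sep, davis_dist_sep, davis_dist_sep]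
    rw [← hE, e2, e3, e4]
  rw [hth]
  have hΔrfin : (symmDiff E {r}).Finite := finite_symmDiff hEfin r
  by_cases hrr : r = r'
  · rw [← hrr]
    rw [symmDiff_symmDiff_cancel_right]
    refine iff_of_true ?_ rfl
    by_cases hmem : r ∈ E
    · have h1 := ncard_symmDiff_mem hEfin hmem
      omega
    · have h1 := ncard_symmDiff_not_mem hEfin hmem
      omega
  · refine iff_of_false ?_ hrr
    intro hne
    apply hne
    have hmm : r' ∈ symmDiff E {r} ↔ r' ∈ E :=
      mem_symmDiff_singleton_of_ne (fun hh => hrr hh.symm)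
    by_cases hm1 : r ∈ E <;> by_cases hm2 : r' ∈ E
    · have h1 := ncard_symmDiff_mem hEfin hm1
      have h2 := ncard_symmDiff_mem hEfin hm2
      have h3 := ncard_symmDiff_mem hΔrfin (hmm.mpr hm2)
      omega
    · have h1 := ncard_symmDiff_mem hEfin hm1
      have h2 := ncard_symmDiff_not_mem hEfin hm2
      have h3 := ncard_symmDiff_not_mem hΔrfin (fun hh => hm2 (hmm.mp hh))
      omega
    · have h1 := ncard_symmDiff_not_mem hEfin hm1
      have h2 := ncard_symmDiff_mem hEfin hm2
      have h3 := ncard_symmDiff_mem hΔrfin (hmm.mpr hm2)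
      omega
    · have h1 := ncard_symmDiff_not_mem hEfin hm1
      have h2 := ncard_symmDiff_not_mem hEfin hm2
      have h3 := ncard_symmDiff_not_mem hΔrfin (fun hh => hm2 (hmm.mp hh))
      omega

end RacgAux
namespace RacgAux

variable {A : Type*} (Γ : SimpleGraph A)

/-! ### Hyperplanes of the Davis graph -/

/-- The hyperplane through the edge `(g, g·s_a)`. -/
def hypOf (g : RACG A Γ) (a : A) : Set (RACG A Γ × RACG A Γ) :=
  {f | (davisGraph A Γ).Adj f.1 f.2 ∧ Theta (davisGraph A Γ) (g, g * racgGen Γ a) f}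

theorem mem_hypOf {g : RACG A Γ} {a : A} {x y : RACG A Γ} :
    (x, y) ∈ hypOf Γ g a ↔
      ∃ c, y = x * racgGen Γ c ∧
        x * racgGen Γ c * x⁻¹ = g * racgGen Γ a * g⁻¹ := by
  unfold hypOf
  rw [Set.mem_setOf_eq]
  constructor
  · rintro ⟨hadj, hth⟩
    obtain ⟨hne, c, hy⟩ := (davis_adj_iff Γ _ _).mp hadj
    have hy' : y = x * racgGen Γ c := hy
    subst hy'
    exact ⟨c, rfl, ((theta_iff Γ g x a c).mp hth).symm⟩
  · rintro ⟨c, rfl, hw⟩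
    exact ⟨davis_adj_gen Γ x c, (theta_iff Γ g x a c).mpr hw.symm⟩

theorem base_mem_hypOf (g : RACG A Γ) (a : A) :
    (g, g * racgGen Γ a) ∈ hypOf Γ g a :=
  (mem_hypOf Γ).mpr ⟨a, rfl, rfl⟩

theorem isHyperplane_hypOf (g : RACG A Γ) (a : A) :
    IsHyperplane (davisGraph A Γ) (hypOf Γ g a) :=
  ⟨(g, g * racgGen Γ a), davis_adj_gen Γ g a, rfl⟩

theorem isHyperplane_iff {h : Set (RACG A Γ × RACG A Γ)} :
    IsHyperplane (davisGraph A Γ) h ↔ ∃ g a, h = hypOf Γ g a := by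
  constructor
  · rintro ⟨e, hadj, rfl⟩
    obtain ⟨hne, c, hc⟩ := (davis_adj_iff Γ _ _).mp hadj
    refine ⟨e.1, c, ?_⟩
    have he : e = (e.1, e.1 * racgGen Γ c) := Prod.ext rfl hc
    conv_lhs => rw [he]
    rfl
  · rintro ⟨g, a, rfl⟩
    exact isHyperplane_hypOf Γ g a

theorem hypOf_eq_iff {g h : RACG A Γ} {a b : A} :
    hypOf Γ g a = hypOf Γ h b ↔
      g * racgGen Γ a * g⁻¹ = h * racgGen Γ b * h⁻¹ := by
  constructor
  · intro heq
    have hmem := base_mem_hypOf Γ g a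
    rw [heq] at hmem
    obtain ⟨c, hc, hw⟩ := (mem_hypOf Γ).mp hmem
    have hac : racgGen Γ a = racgGen Γ c := mul_left_cancel hc
    rw [show g * racgGen Γ a * g⁻¹ = g * racgGen Γ c * g⁻¹ by rw [hac]]
    exact hw
  · intro heq
    ext p
    obtain ⟨x, y⟩ := p
    rw [mem_hypOf, mem_hypOf]
    constructor
    · rintro ⟨c, rfl, hw⟩
      exact ⟨c, rfl, hw.trans heq⟩
    · rintro ⟨c, rfl, hw⟩
      exact ⟨c, rfl, hw.trans heq.symm⟩

theorem hypOf_label_eq {g h : RACG A Γ} {a b : A}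
    (heq : hypOf Γ g a = hypOf Γ h b) : a = b :=
  wall_label_eq Γ ((hypOf_eq_iff Γ).mp heq)

theorem conj_gen_of_comm {c d : A}
    (h : racgGen Γ c * racgGen Γ d = racgGen Γ d * racgGen Γ c) (x : RACG A Γ) :
    (x * racgGen Γ c) * racgGen Γ d * (x * racgGen Γ c)⁻¹ = x * racgGen Γ d * x⁻¹ := by
  have hcdc : racgGen Γ c * racgGen Γ d * racgGen Γ c = racgGen Γ d := by
    rw [h, mul_assoc, racgGen_mul_self, mul_one]
  calc (x * racgGen Γ c) * racgGen Γ d * (x * racgGen Γ c)⁻¹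
      = x * (racgGen Γ c * racgGen Γ d * (racgGen Γ c)⁻¹) * x⁻¹ := by group
    _ = x * (racgGen Γ c * racgGen Γ d * racgGen Γ c) * x⁻¹ := by rw [racgGen_inv]
    _ = x * racgGen Γ d * x⁻¹ := by rw [hcdc]

theorem comm_of_wall_eq {a b : A} {x : RACG A Γ}
    (h : (x * racgGen Γ a) * racgGen Γ b * (x * racgGen Γ a)⁻¹
        = x * racgGen Γ b * x⁻¹) :
    racgGen Γ a * racgGen Γ b = racgGen Γ b * racgGen Γ a := by
  have h2 : racgGen Γ a * racgGen Γ b * (racgGen Γ a)⁻¹ = racgGen Γ b := by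
    calc racgGen Γ a * racgGen Γ b * (racgGen Γ a)⁻¹
        = x⁻¹ * ((x * racgGen Γ a) * racgGen Γ b * (x * racgGen Γ a)⁻¹) * x := by group
      _ = x⁻¹ * (x * racgGen Γ b * x⁻¹) * x := by rw [h]
      _ = racgGen Γ b := by group
  calc racgGen Γ a * racgGen Γ b
      = (racgGen Γ a * racgGen Γ b * (racgGen Γ a)⁻¹) * racgGen Γ a := by group
    _ = racgGen Γ b * racgGen Γ a := by rw [h2]

end RacgAux

/-- for `Γ` finite and not a cone (so that `W_Γ` has no finite direct
factors), the universal cover of the Davis complex has a hyperplane with an extremal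
vertex iff there are distinct vertices `a, b` of `Γ` with `St(a) ⊆ St(b)`. -/
theorem davis_hyperplane_extremal_iff {A : Type*} [Fintype A] (Γ : SimpleGraph A)
    (hnc : ¬ GraphIsCone Γ) :
    (∃ (w : Set (RACG A Γ × RACG A Γ)) (e : RACG A Γ × RACG A Γ),
      IsHyperplane (davisGraph A Γ) w ∧ e ∈ w ∧ HypLinkCone (davisGraph A Γ) w e) ↔
    ∃ a b : A, a ≠ b ∧ starSet Γ a ⊆ starSet Γ b := by
  classical
  constructor
  · rintro ⟨w, e, hw, hew, hcone⟩
    obtain ⟨g₀, a₀, rfl⟩ := (RacgAux.isHyperplane_iff Γ).mp hw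
    obtain ⟨x, y⟩ := e
    obtain ⟨a, hy, hwall⟩ := (RacgAux.mem_hypOf Γ).mp hew
    have hy' : y = x * racgGen Γ a := hy
    subst hy'
    have hweq : RacgAux.hypOf Γ g₀ a₀ = RacgAux.hypOf Γ x a :=
      (RacgAux.hypOf_eq_iff Γ).mpr hwall.symm
    obtain ⟨u, hu, hune, hadjE, hall⟩ := hcone
    obtain ⟨g₁, b₁, rfl⟩ := (RacgAux.isHyperplane_iff Γ).mp hu
    have hadjE' : ∃ c d, (x, c) ∈ RacgAux.hypOf Γ g₁ b₁ ∧
        (x * racgGen Γ a, d) ∈ RacgAux.hypOf Γ g₁ b₁ ∧ (davisGraph A Γ).Adj c d := hadjE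
    obtain ⟨c, d, hc, hd, -⟩ := hadjE'
    obtain ⟨b, hcb, hwb⟩ := (RacgAux.mem_hypOf Γ).mp hc
    have hueq : RacgAux.hypOf Γ g₁ b₁ = RacgAux.hypOf Γ x b :=
      (RacgAux.hypOf_eq_iff Γ).mpr hwb.symm
    rw [hueq] at hd
    obtain ⟨b', hdb, hwb'⟩ := (RacgAux.mem_hypOf Γ).mp hd
    have hbb' : b' = b := RacgAux.wall_label_eq Γ hwb'
    rw [hbb'] at hwb'
    have hcm : racgGen Γ a * racgGen Γ b = racgGen Γ b * racgGen Γ a :=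
      RacgAux.comm_of_wall_eq Γ hwb'
    have hba : b ≠ a := by
      intro hba
      apply hune
      rw [hueq, hba, ← hweq]
    have hadj_ab : Γ.Adj a b := RacgAux.adj_of_comm Γ (fun h => hba h.symm) hcm
    refine ⟨a, b, fun h => hba h.symm, ?_⟩
    intro t ht
    rcases ht with rfl | hat
    · exact Or.inr hadj_ab.symm
    · by_cases htb : t = b
      · exact Or.inl htb
      · have hta : t ≠ a := fun h => hat.ne h.symm
        have hcat := RacgAux.comm_of_adj Γ hat
        have h1 : (x, x * racgGen Γ t) ∈ RacgAux.hypOf Γ x t :=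
          RacgAux.base_mem_hypOf Γ x t
        have h2 : (x * racgGen Γ a, x * racgGen Γ a * racgGen Γ t)
            ∈ RacgAux.hypOf Γ x t :=
          (RacgAux.mem_hypOf Γ).mpr ⟨t, rfl, RacgAux.conj_gen_of_comm Γ hcat x⟩
        have hadjE2 : HypAdjEdge (davisGraph A Γ) (RacgAux.hypOf Γ x t)
            (x, x * racgGen Γ a) := by
          refine ⟨x * racgGen Γ t, x * racgGen Γ a * racgGen Γ t, h1, h2, ?_⟩
          rw [show x * racgGen Γ a * racgGen Γ t = (x * racgGen Γ t) * racgGen Γ a from by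
            rw [mul_assoc, hcat, ← mul_assoc]]
          exact RacgAux.davis_adj_gen Γ _ a
        have hne_w : RacgAux.hypOf Γ x t ≠ RacgAux.hypOf Γ g₀ a₀ := by
          intro h
          exact hta (RacgAux.hypOf_label_eq Γ (h.trans hweq))
        have hne_u : RacgAux.hypOf Γ x t ≠ RacgAux.hypOf Γ g₁ b₁ := by
          intro h
          exact htb (RacgAux.hypOf_label_eq Γ (h.trans hueq))
        have htrans := hall (RacgAux.hypOf Γ x t) (RacgAux.isHyperplane_hypOf Γ x t)
          hne_w hadjE2 hne_u
        rw [hueq] at htrans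
        obtain ⟨α, β, γ, δ, m1, m2, m3, m4, -, -, -, -⟩ := htrans
        obtain ⟨c₁, hβ, hw1⟩ := (RacgAux.mem_hypOf Γ).mp m1
        have hc₁ : c₁ = b := RacgAux.wall_label_eq Γ hw1
        rw [hc₁] at hβ
        obtain ⟨c₂, hδ₁, hw2⟩ := (RacgAux.mem_hypOf Γ).mp m2
        have hc₂ : c₂ = b := RacgAux.wall_label_eq Γ hw2
        rw [hc₂] at hδ₁
        obtain ⟨c₃, hγ, hw3⟩ := (RacgAux.mem_hypOf Γ).mp m3
        have hc₃ : c₃ = t := RacgAux.wall_label_eq Γ hw3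
        rw [hc₃] at hγ
        obtain ⟨c₄, hδ₂, hw4⟩ := (RacgAux.mem_hypOf Γ).mp m4
        have hc₄ : c₄ = t := RacgAux.wall_label_eq Γ hw4
        rw [hc₄] at hδ₂
        -- δ = γ * S b = (α * S t) * S b  and  δ = β * S t = (α * S b) * S t
        have hδeq : α * (racgGen Γ t * racgGen Γ b) = α * (racgGen Γ b * racgGen Γ t) := by
          have e1 : δ = α * racgGen Γ t * racgGen Γ b := by rw [hδ₁, hγ]
          have e2 : δ = α * racgGen Γ b * racgGen Γ t := by rw [hδ₂, hβ]
          rw [← mul_assoc, ← mul_assoc, ← e1, ← e2]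
        have hcbt : racgGen Γ b * racgGen Γ t = racgGen Γ t * racgGen Γ b :=
          (mul_left_cancel hδeq).symm
        exact Or.inr (RacgAux.adj_of_comm Γ (fun h => htb h.symm) hcbt)
  · rintro ⟨a, b, hab, hst⟩
    have hadj : Γ.Adj a b := by
      have ha : a ∈ starSet Γ b := hst (Or.inl rfl)
      rcases ha with h | h
      · exact absurd h hab
      · exact h.symm
    have hcomm := RacgAux.comm_of_adj Γ hadj
    refine ⟨RacgAux.hypOf Γ 1 a, ((1 : RACG A Γ), 1 * racgGen Γ a),
      RacgAux.isHyperplane_hypOf Γ 1 a, RacgAux.base_mem_hypOf Γ 1 a, ?_⟩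
    refine ⟨RacgAux.hypOf Γ 1 b, RacgAux.isHyperplane_hypOf Γ 1 b, ?_, ?_, ?_⟩
    · intro h
      exact hab (RacgAux.hypOf_label_eq Γ h).symm
    · refine ⟨1 * racgGen Γ b, (1 * racgGen Γ a) * racgGen Γ b,
        RacgAux.base_mem_hypOf Γ 1 b, ?_, ?_⟩
      · exact (RacgAux.mem_hypOf Γ).mpr ⟨b, rfl, RacgAux.conj_gen_of_comm Γ hcomm 1⟩
      · rw [show (1 : RACG A Γ) * racgGen Γ a * racgGen Γ b
            = (1 * racgGen Γ b) * racgGen Γ a from by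
          rw [mul_assoc, hcomm, ← mul_assoc]]
        exact RacgAux.davis_adj_gen Γ _ a
    · intro u' hu' hnew hadje hneu
      obtain ⟨g₀, t₀, rfl⟩ := (RacgAux.isHyperplane_iff Γ).mp hu'
      have hadje' : ∃ c d, ((1 : RACG A Γ), c) ∈ RacgAux.hypOf Γ g₀ t₀ ∧
          (1 * racgGen Γ a, d) ∈ RacgAux.hypOf Γ g₀ t₀ ∧ (davisGraph A Γ).Adj c d := hadje
      obtain ⟨c, d, hc, hd, -⟩ := hadje'
      obtain ⟨t, hct, hwt⟩ := (RacgAux.mem_hypOf Γ).mp hc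
      have hueq : RacgAux.hypOf Γ g₀ t₀ = RacgAux.hypOf Γ 1 t :=
        (RacgAux.hypOf_eq_iff Γ).mpr hwt.symm
      rw [hueq] at hd
      obtain ⟨t', hdt, hwt'⟩ := (RacgAux.mem_hypOf Γ).mp hd
      have htt : t' = t := RacgAux.wall_label_eq Γ hwt'
      rw [htt] at hwt'
      have hcm : racgGen Γ a * racgGen Γ t = racgGen Γ t * racgGen Γ a :=
        RacgAux.comm_of_wall_eq Γ hwt'
      have hta : t ≠ a := by
        intro h
        apply hnew
        rw [hueq, h]
      have hat : Γ.Adj a t := RacgAux.adj_of_comm Γ (fun h => hta h.symm) hcm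
      have htb : t ≠ b := by
        intro h
        apply hneu
        rw [hueq, h]
      have htb' : Γ.Adj b t := by
        have hmem : t ∈ starSet Γ b := hst (Or.inr hat)
        rcases hmem with h | h
        · exact absurd h htb
        · exact h
      have hcbt := RacgAux.comm_of_adj Γ htb'
      rw [hueq]
      refine ⟨1, 1 * racgGen Γ b, 1 * racgGen Γ t, (1 * racgGen Γ t) * racgGen Γ b,
        RacgAux.base_mem_hypOf Γ 1 b, ?_, RacgAux.base_mem_hypOf Γ 1 t, ?_, ?_, ?_, ?_, ?_⟩
      · exact (RacgAux.mem_hypOf Γ).mpr ⟨b, rfl, RacgAux.conj_gen_of_comm Γ hcbt.symm 1⟩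
      · refine (RacgAux.mem_hypOf Γ).mpr ⟨t, ?_, RacgAux.conj_gen_of_comm Γ hcbt 1⟩
        rw [one_mul, one_mul]
        exact hcbt.symm
      · exact RacgAux.davis_adj_gen Γ 1 b
      · exact RacgAux.davis_adj_gen Γ _ b
      · exact RacgAux.davis_adj_gen Γ 1 t
      · rw [show (1 : RACG A Γ) * racgGen Γ t * racgGen Γ b
            = (1 * racgGen Γ b) * racgGen Γ t from by
          rw [mul_assoc, ← hcbt, ← mul_assoc]]
        exact RacgAux.davis_adj_gen Γ _ t
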